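/- Let p > 0, let A be a complex n×n matrix whose spectrum belongs to P_i = {λ ∈ ℂ : (Im λ)² < 2p·Re λ}, and let H be a Hermitian positive definite matrix satisfying HA + A*H − (1/(2p))·A*HA + (1/(4p))·(HA² + (A*)²H) = I. If B is a complex n×n matrix such that HB + B*H − (1/(2p))·(A*HB + B*HA + B*HB) + (1/(4p))·(H(AB + BA + B²) + (AB + BA + B²)*H) > −I (i.e., this matrix plus I is positive definite), then the spectrum of A + B also belongs to P_i. -/

import Mathlib

open Matrix
open scoped ComplexOrder


lemma parabola_of_lyapunov {n : ℕ} (p : ℝ) (hp : 0 < p)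
    (C H : Matrix (Fin n) (Fin n) ℂ) (hH : H.PosDef)
    (hL : (H * C + Cᴴ * H - ((1 / (2 * p) : ℝ) : ℂ) • (Cᴴ * H * C)
      + ((1 / (4 * p) : ℝ) : ℂ) • (H * C ^ 2 + Cᴴ ^ 2 * H)).PosDef) :
    ∀ μ ∈ spectrum ℂ C, μ.im ^ 2 < 2 * p * μ.re := by
  intro μ hμ
  have h1 : ¬ IsUnit (algebraMap ℂ (Matrix (Fin n) (Fin n) ℂ) μ - C) := spectrum.mem_iff.mp hμ
  rw [Matrix.isUnit_iff_isUnit_det, isUnit_iff_ne_zero, not_not] at h1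
  obtain ⟨v, hv0, hv⟩ := Matrix.exists_mulVec_eq_zero_iff.mpr h1
  have hCv : C *ᵥ v = μ • v := by
    have h2 : (algebraMap ℂ (Matrix (Fin n) (Fin n) ℂ) μ) *ᵥ v - C *ᵥ v = 0 := by
      rw [← Matrix.sub_mulVec]; exact hv
    have h3 := sub_eq_zero.mp h2
    rw [Algebra.algebraMap_eq_smul_one, Matrix.smul_mulVec, Matrix.one_mulVec] at h3
    exact h3.symm
  have hHv := (Matrix.posDef_iff_dotProduct_mulVec.mp hH).2 hv0
  have hLv := (Matrix.posDef_iff_dotProduct_mulVec.mp hL).2 hv0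
  set h : ℂ := star v ⬝ᵥ H *ᵥ v with hh
  have e1 : ∀ M : Matrix (Fin n) (Fin n) ℂ,
      star v ⬝ᵥ (M * C) *ᵥ v = μ * (star v ⬝ᵥ M *ᵥ v) := by
    intro M
    rw [← Matrix.mulVec_mulVec, hCv, Matrix.mulVec_smul, dotProduct_smul, smul_eq_mul]
  have e2 : ∀ M : Matrix (Fin n) (Fin n) ℂ,
      star v ⬝ᵥ (Cᴴ * M) *ᵥ v = (starRingEnd ℂ) μ * (star v ⬝ᵥ M *ᵥ v) := by
    intro M
    rw [← Matrix.mulVec_mulVec, Matrix.dotProduct_mulVec, ← Matrix.star_mulVec, hCv,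
      star_smul, smul_dotProduct, smul_eq_mul]
    rfl
  have d1 : star v ⬝ᵥ (H * C) *ᵥ v = μ * h := e1 H
  have d2 : star v ⬝ᵥ (Cᴴ * H) *ᵥ v = (starRingEnd ℂ) μ * h := e2 H
  have d3 : star v ⬝ᵥ (Cᴴ * H * C) *ᵥ v = μ * ((starRingEnd ℂ) μ * h) := by
    rw [e1 (Cᴴ * H), d2]
  have d4 : star v ⬝ᵥ (H * C ^ 2) *ᵥ v = μ * (μ * h) := by
    rw [pow_two, ← mul_assoc, e1 (H * C), d1]
  have d5 : star v ⬝ᵥ (Cᴴ ^ 2 * H) *ᵥ v = (starRingEnd ℂ) μ * ((starRingEnd ℂ) μ * h) := by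
    rw [pow_two, mul_assoc, e2 (Cᴴ * H), d2]
  have hdot : star v ⬝ᵥ (H * C + Cᴴ * H - ((1 / (2 * p) : ℝ) : ℂ) • (Cᴴ * H * C)
      + ((1 / (4 * p) : ℝ) : ℂ) • (H * C ^ 2 + Cᴴ ^ 2 * H)) *ᵥ v
      = μ * h + (starRingEnd ℂ) μ * h
        - ((1 / (2 * p) : ℝ) : ℂ) * (μ * ((starRingEnd ℂ) μ * h))
        + ((1 / (4 * p) : ℝ) : ℂ) * (μ * (μ * h) + (starRingEnd ℂ) μ * ((starRingEnd ℂ) μ * h)) := by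
    simp only [Matrix.add_mulVec, Matrix.sub_mulVec, Matrix.smul_mulVec,
      dotProduct_add, dotProduct_sub, dotProduct_smul, smul_eq_mul,
      d1, d2, d3, d4, d5]
  rw [hdot] at hLv
  rw [Complex.lt_def] at hHv
  obtain ⟨hr, hi⟩ := hHv
  simp only [Complex.zero_re, Complex.zero_im] at hr hi
  rw [Complex.lt_def] at hLv
  obtain ⟨hsr, -⟩ := hLv
  simp only [Complex.zero_re, Complex.add_re, Complex.sub_re, Complex.mul_re, Complex.mul_im,
    Complex.conj_re, Complex.conj_im, Complex.ofReal_re, Complex.ofReal_im, ← hi] at hsr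
  ring_nf at hsr
  field_simp at hsr
  nlinarith [mul_pos hp hr, sq_nonneg μ.im, sq_nonneg μ.re, hr, hp]

/-- Perturbation theorem for the interior of the parabola: if the spectrum of `A`
lies in `P_i`, `H > 0` solves the parabolic Lyapunov-type equation with right-hand
side `I`, and the perturbation `B` satisfies the matrix inequality (15), then the
spectrum of `A + B` also lies in `P_i`. -/
theorem spectrum_perturbed_in_parabola {n : ℕ} (p : ℝ) (hp : 0 < p)
    (A : Matrix (Fin n) (Fin n) ℂ)
    (hA : ∀ μ ∈ spectrum ℂ A, μ.im ^ 2 < 2 * p * μ.re)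
    (H : Matrix (Fin n) (Fin n) ℂ) (hH : H.PosDef)
    (heq : H * A + Aᴴ * H - ((1 / (2 * p) : ℝ) : ℂ) • (Aᴴ * H * A)
      + ((1 / (4 * p) : ℝ) : ℂ) • (H * A ^ 2 + Aᴴ ^ 2 * H) = 1)
    (B : Matrix (Fin n) (Fin n) ℂ)
    (hB : (H * B + Bᴴ * H - ((1 / (2 * p) : ℝ) : ℂ) • (Aᴴ * H * B + Bᴴ * H * A + Bᴴ * H * B)
      + ((1 / (4 * p) : ℝ) : ℂ) •
        (H * (A * B + B * A + B ^ 2) + (A * B + B * A + B ^ 2)ᴴ * H) + 1).PosDef) :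
    ∀ μ ∈ spectrum ℂ (A + B), μ.im ^ 2 < 2 * p * μ.re := by
  apply parabola_of_lyapunov p hp (A + B) H hH
  have key : H * (A + B) + (A + B)ᴴ * H - ((1 / (2 * p) : ℝ) : ℂ) • ((A + B)ᴴ * H * (A + B))
      + ((1 / (4 * p) : ℝ) : ℂ) • (H * (A + B) ^ 2 + (A + B)ᴴ ^ 2 * H)
      = H * B + Bᴴ * H - ((1 / (2 * p) : ℝ) : ℂ) • (Aᴴ * H * B + Bᴴ * H * A + Bᴴ * H * B)
      + ((1 / (4 * p) : ℝ) : ℂ) •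
        (H * (A * B + B * A + B ^ 2) + (A * B + B * A + B ^ 2)ᴴ * H) + 1 := by
    rw [← heq]
    simp only [conjTranspose_add, conjTranspose_mul, conjTranspose_pow, Algebra.smul_def]
    noncomm_ring
  rw [key]
  exact hB
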